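/- For n ∈ ℕ and ε ∈ {±1}, the U_q(sl_2)-module V(n,ε) is irreducible if and only if q^{2i} ≠ 1 for all 1 ≤ i ≤ n. -/

import Mathlib

/-- For `n ∈ ℕ` and `ε = ±1`, the `(n+1)`-dimensional
`U_q(sl₂)`-module `V(n,ε)` (with its defining basis action) is irreducible (i.e. the
only subspaces invariant under `E`, `F`, `K`, `K⁻¹` are `⊥` and `⊤`) if and only if
`q^{2i} ≠ 1` for all `1 ≤ i ≤ n`. -/
theorem uq_Vn_irreducible_iff (F : Type*) [Field F] (q : F) (hq0 : q ≠ 0)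
    (hq4 : q ^ 4 ≠ 1)
    (n : ℕ) (ε : F) (hε : ε = 1 ∨ ε = -1)
    (eM fM kM kinvM : Module.End F (Fin (n + 1) → F))
    (hk : ∀ i : ℕ, ∀ h : i ≤ n, kM (Pi.single ⟨i, by omega⟩ 1 : Fin (n + 1) → F) =
        (ε * q ^ ((n : ℤ) - 2 * i)) • (Pi.single ⟨i, by omega⟩ 1 : Fin (n + 1) → F))
    (hkinv : ∀ i : ℕ, ∀ h : i ≤ n,
        kinvM (Pi.single ⟨i, by omega⟩ 1 : Fin (n + 1) → F) =
        (ε⁻¹ * q ^ (2 * (i : ℤ) - n)) • (Pi.single ⟨i, by omega⟩ 1 : Fin (n + 1) → F))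
    (hf : ∀ i : ℕ, ∀ h : i < n, fM (Pi.single ⟨i, by omega⟩ 1 : Fin (n + 1) → F) =
        ((q ^ (i + 1) - q⁻¹ ^ (i + 1)) / (q - q⁻¹)) •
          (Pi.single ⟨i + 1, by omega⟩ 1 : Fin (n + 1) → F))
    (hfn : fM (Pi.single ⟨n, by omega⟩ 1 : Fin (n + 1) → F) = 0)
    (he0 : eM (Pi.single ⟨0, by omega⟩ 1 : Fin (n + 1) → F) = 0)
    (he : ∀ i : ℕ, ∀ h : i < n, eM (Pi.single ⟨i + 1, by omega⟩ 1 : Fin (n + 1) → F) =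
        (ε * ((q ^ ((n : ℤ) - i) - q ^ ((i : ℤ) - n)) / (q - q⁻¹))) •
          (Pi.single ⟨i, by omega⟩ 1 : Fin (n + 1) → F)) :
    (∀ W : Submodule F (Fin (n + 1) → F),
        W ≤ W.comap eM → W ≤ W.comap fM → W ≤ W.comap kM → W ≤ W.comap kinvM →
        W = ⊥ ∨ W = ⊤)
      ↔ (∀ i : ℕ, 1 ≤ i → i ≤ n → q ^ (2 * i) ≠ 1) := by
  classical
  have hq2 : q ^ 2 ≠ 1 := by
    intro h
    apply hq4
    have h4 : q ^ 4 = (q ^ 2) ^ 2 := by ring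
    rw [h4, h, one_pow]
  have hsub : ∀ x : F, x ≠ 0 → x ^ 2 ≠ 1 → x - x⁻¹ ≠ 0 := by
    intro x hx h hs
    apply h
    have hxx : x = x⁻¹ := sub_eq_zero.mp hs
    calc x ^ 2 = x * x := sq x
      _ = x * x⁻¹ := by rw [← hxx]
      _ = 1 := mul_inv_cancel₀ hx
  have hden : q - q⁻¹ ≠ 0 := hsub q hq0 hq2
  have hε0 : ε ≠ 0 := by rcases hε with h | h <;> rw [h] <;> norm_num
  have hexp : ∀ w : Fin (n + 1) → F, w = ∑ j, w j • (Pi.single j 1 : Fin (n + 1) → F) := by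
    intro w; funext k; simp [Finset.sum_apply, Pi.single_apply]
  have expand : ∀ (T : Module.End F (Fin (n + 1) → F)) (w : Fin (n + 1) → F) (k : Fin (n + 1)),
      T w k = ∑ j, w j * (T (Pi.single j 1) k) := by
    intro T w k
    conv_lhs => rw [hexp w]
    rw [map_sum]
    simp [Finset.sum_apply, map_smul]
  have hsing : ∀ (c : F) (j k : Fin (n + 1)),
      (c • (Pi.single j 1 : Fin (n + 1) → F)) k = if k = j then c else 0 := by
    intro c j k
    by_cases h : k = j <;> simp [h, Pi.single_apply]
  -- evaluation lemmas
  have eval_k : ∀ (w : Fin (n + 1) → F) (k : Fin (n + 1)),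
      kM w k = (ε * q ^ ((n : ℤ) - 2 * (k : ℕ))) * w k := by
    intro w k
    rw [expand kM w k, Finset.sum_eq_single k]
    · have h := hk (k : ℕ) (by omega)
      rw [Fin.eta] at h
      rw [h, hsing, if_pos rfl]
      ring
    · intro j _ hj
      have h := hk (j : ℕ) (by omega)
      rw [Fin.eta] at h
      rw [h, hsing, if_neg (fun hh => hj hh.symm), mul_zero]
    · simp
  have eval_kinv : ∀ (w : Fin (n + 1) → F) (k : Fin (n + 1)),
      kinvM w k = (ε⁻¹ * q ^ (2 * ((k : ℕ) : ℤ) - n)) * w k := by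
    intro w k
    rw [expand kinvM w k, Finset.sum_eq_single k]
    · have h := hkinv (k : ℕ) (by omega)
      rw [Fin.eta] at h
      rw [h, hsing, if_pos rfl]
      ring
    · intro j _ hj
      have h := hkinv (j : ℕ) (by omega)
      rw [Fin.eta] at h
      rw [h, hsing, if_neg (fun hh => hj hh.symm), mul_zero]
    · simp
  have eval_f : ∀ (w : Fin (n + 1) → F) (k : Fin (n + 1)), fM w k =
      if h : 1 ≤ (k : ℕ) then
        ((q ^ (k : ℕ) - q⁻¹ ^ (k : ℕ)) / (q - q⁻¹)) * w ⟨(k : ℕ) - 1, by omega⟩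
      else 0 := by
    intro w k
    rw [expand fM w k]
    by_cases hk1 : 1 ≤ (k : ℕ)
    · rw [dif_pos hk1, Finset.sum_eq_single (⟨(k : ℕ) - 1, by omega⟩ : Fin (n + 1))]
      · have hlt : (k : ℕ) - 1 < n := by have := k.isLt; omega
        have h := hf ((k : ℕ) - 1) hlt
        have e1 : (k : ℕ) - 1 + 1 = (k : ℕ) := by omega
        have e2 : (⟨(k : ℕ) - 1 + 1, by omega⟩ : Fin (n + 1)) = k := by
          apply Fin.ext; simp [e1]
        rw [h, hsing, if_pos e2.symm]
        simp only [Fin.val_mk, e1]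
        ring
      · intro j _ hj
        rcases Nat.lt_or_ge (j : ℕ) n with hjn | hjn
        · have h := hf (j : ℕ) hjn
          rw [Fin.eta] at h
          rw [h, hsing, if_neg, mul_zero]
          intro hh
          apply hj
          apply Fin.ext
          have := congrArg Fin.val hh
          simp at this ⊢
          omega
        · have hje : j = ⟨n, by omega⟩ := by
            apply Fin.ext; have := j.isLt; simp; omega
          rw [hje, hfn]
          simp
      · simp
    · rw [dif_neg hk1]
      apply Finset.sum_eq_zero
      intro j _
      rcases Nat.lt_or_ge (j : ℕ) n with hjn | hjn
      · have h := hf (j : ℕ) hjn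
        rw [Fin.eta] at h
        rw [h, hsing, if_neg, mul_zero]
        intro hh
        have := congrArg Fin.val hh
        simp at this
        omega
      · have hje : j = ⟨n, by omega⟩ := by
          apply Fin.ext; have := j.isLt; simp; omega
        rw [hje, hfn]
        simp
  have eval_e : ∀ (w : Fin (n + 1) → F) (k : Fin (n + 1)), eM w k =
      if h : (k : ℕ) < n then
        (ε * ((q ^ ((n : ℤ) - (k : ℕ)) - q ^ (((k : ℕ) : ℤ) - n)) / (q - q⁻¹))) *
          w ⟨(k : ℕ) + 1, by omega⟩
      else 0 := by
    intro w k
    rw [expand eM w k]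
    by_cases hkn : (k : ℕ) < n
    · rw [dif_pos hkn, Finset.sum_eq_single (⟨(k : ℕ) + 1, by omega⟩ : Fin (n + 1))]
      · have h := he (k : ℕ) hkn
        rw [h, hsing, if_pos (Fin.eta k k.isLt).symm]
        ring
      · intro j _ hj
        rcases Nat.eq_zero_or_pos (j : ℕ) with hj0 | hj0
        · have hje : j = ⟨0, by omega⟩ := by apply Fin.ext; simp [hj0]
          rw [hje, he0]
          simp
        · have h := he ((j : ℕ) - 1) (by have := j.isLt; omega)
          have e2 : (⟨(j : ℕ) - 1 + 1, by omega⟩ : Fin (n + 1)) = j := by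
            apply Fin.ext; simp; omega
          rw [e2] at h
          rw [h, hsing, if_neg, mul_zero]
          intro hh
          apply hj
          apply Fin.ext
          have := congrArg Fin.val hh
          simp at this ⊢
          omega
      · simp
    · rw [dif_neg hkn]
      apply Finset.sum_eq_zero
      intro j _
      rcases Nat.eq_zero_or_pos (j : ℕ) with hj0 | hj0
      · have hje : j = ⟨0, by omega⟩ := by apply Fin.ext; simp [hj0]
        rw [hje, he0]
        simp
      · have h := he ((j : ℕ) - 1) (by have := j.isLt; omega)
        have e2 : (⟨(j : ℕ) - 1 + 1, by omega⟩ : Fin (n + 1)) = j := by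
          apply Fin.ext; simp; omega
        rw [e2] at h
        rw [h, hsing, if_neg, mul_zero]
        intro hh
        have := congrArg Fin.val hh
        have hjl := j.isLt
        simp at this
        omega
  constructor
  · -- irreducible → no small roots of unity
    intro hirr i hi1 hin
    intro hqi
    let W : Submodule F (Fin (n + 1) → F) :=
      { carrier := {w | ∀ j : Fin (n + 1), i ≤ (j : ℕ) → w j = 0}
        add_mem' := by intro a b ha hb j hj; simp [ha j hj, hb j hj]
        zero_mem' := by intro j hj; rfl
        smul_mem' := by intro c a ha j hj; simp [ha j hj] }
    have hmem : ∀ w : Fin (n + 1) → F,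
        w ∈ W ↔ ∀ j : Fin (n + 1), i ≤ (j : ℕ) → w j = 0 := fun _ => Iff.rfl
    have hWe : W ≤ W.comap eM := by
      intro w hw
      rw [Submodule.mem_comap, hmem]
      rw [hmem] at hw
      intro j hj
      rw [eval_e w j]
      split_ifs with h
      · rw [hw ⟨(j : ℕ) + 1, by omega⟩ (by simp; omega), mul_zero]
      · rfl
    have hWf : W ≤ W.comap fM := by
      intro w hw
      rw [Submodule.mem_comap, hmem]
      rw [hmem] at hw
      intro j hj
      rw [eval_f w j]
      split_ifs with h
      · rcases Nat.lt_or_ge ((j : ℕ) - 1) i with hc | hc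
        · have hji : (j : ℕ) = i := by omega
          have hz : q ^ (j : ℕ) - q⁻¹ ^ (j : ℕ) = 0 := by
            rw [hji, inv_pow, sub_eq_zero]
            apply eq_inv_of_mul_eq_one_right
            rw [← pow_add, show i + i = 2 * i by ring]
            exact hqi
          rw [hz]
          simp
        · rw [hw ⟨(j : ℕ) - 1, by omega⟩ (by simpa using hc), mul_zero]
      · rfl
    have hWk : W ≤ W.comap kM := by
      intro w hw
      rw [Submodule.mem_comap, hmem]
      rw [hmem] at hw
      intro j hj
      rw [eval_k w j, hw j hj, mul_zero]
    have hWkinv : W ≤ W.comap kinvM := by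
      intro w hw
      rw [Submodule.mem_comap, hmem]
      rw [hmem] at hw
      intro j hj
      rw [eval_kinv w j, hw j hj, mul_zero]
    rcases hirr W hWe hWf hWk hWkinv with hbot | htop
    · have h0 : (Pi.single (⟨0, by omega⟩ : Fin (n + 1)) 1 : Fin (n + 1) → F) ∈ W := by
        rw [hmem]
        intro j hj
        rw [Pi.single_apply, if_neg]
        intro hh
        have := congrArg Fin.val hh
        simp only [Fin.val_mk] at this
        omega
      rw [hbot, Submodule.mem_bot] at h0
      have := congrFun h0 ⟨0, by omega⟩
      simp [Pi.single_apply] at this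
    · have h1 : (Pi.single (⟨i, by omega⟩ : Fin (n + 1)) 1 : Fin (n + 1) → F) ∈ W := by
        rw [htop]; exact Submodule.mem_top
      rw [hmem] at h1
      have := h1 ⟨i, by omega⟩ (by simp)
      simp [Pi.single_apply] at this
  · -- no small roots of unity → irreducible
    intro hroots W hWe hWf hWk hWkinv
    have hfco : ∀ k : ℕ, k < n → (q ^ (k + 1) - q⁻¹ ^ (k + 1)) / (q - q⁻¹) ≠ 0 := by
      intro k hkn
      apply div_ne_zero _ hden
      rw [inv_pow]
      apply hsub _ (pow_ne_zero _ hq0)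
      intro hh
      apply hroots (k + 1) (by omega) (by omega)
      rw [show 2 * (k + 1) = (k + 1) * 2 by ring, pow_mul]
      exact hh
    have heco : ∀ k : ℕ, k < n →
        ε * ((q ^ ((n : ℤ) - k) - q ^ ((k : ℤ) - n)) / (q - q⁻¹)) ≠ 0 := by
      intro k hkn
      apply mul_ne_zero hε0
      apply div_ne_zero _ hden
      have e1 : (n : ℤ) - k = ((n - k : ℕ) : ℤ) := by push_cast [Nat.cast_sub hkn.le]; ring
      have e2 : (k : ℤ) - n = -(((n - k : ℕ) : ℤ)) := by push_cast [Nat.cast_sub hkn.le]; ring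
      rw [e1, e2, zpow_natCast, zpow_neg, zpow_natCast]
      apply hsub _ (pow_ne_zero _ hq0)
      intro hh
      apply hroots (n - k) (by omega) (by omega)
      rw [show 2 * (n - k) = (n - k) * 2 by ring, pow_mul]
      exact hh
    by_cases hbot : W = ⊥
    · left; exact hbot
    right
    obtain ⟨w0, hw0W, hw0⟩ := (Submodule.ne_bot_iff W).mp hbot
    have key : ∀ m : ℕ, ∀ w : Fin (n + 1) → F, w ∈ W → w ≠ 0 →
        (∀ j : Fin (n + 1), m < (j : ℕ) → w j = 0) →
        (Pi.single (⟨0, by omega⟩ : Fin (n + 1)) 1 : Fin (n + 1) → F) ∈ W := by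
      intro m
      induction m with
      | zero =>
        intro w hw hwne hsupp
        have h0 : w ⟨0, by omega⟩ ≠ 0 := by
          intro h
          apply hwne
          funext j
          rcases Nat.eq_zero_or_pos (j : ℕ) with hj | hj
          · rw [show j = (⟨0, by omega⟩ : Fin (n + 1)) by apply Fin.ext; simp [hj]]
            exact h
          · exact hsupp j hj
        have heq : (Pi.single (⟨0, by omega⟩ : Fin (n + 1)) 1 : Fin (n + 1) → F)
            = (w ⟨0, by omega⟩)⁻¹ • w := by
          funext j
          rcases Nat.eq_zero_or_pos (j : ℕ) with hj | hj
          · have hj' : j = (⟨0, by omega⟩ : Fin (n + 1)) := by apply Fin.ext; simp [hj]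
            rw [hj']
            simp only [Pi.single_apply, if_pos rfl, Pi.smul_apply, smul_eq_mul]
            exact (inv_mul_cancel₀ h0).symm
          · rw [Pi.single_apply, if_neg]
            · simp [hsupp j hj]
            · intro hh
              have := congrArg Fin.val hh
              simp only [Fin.val_mk] at this
              omega
        rw [heq]
        exact Submodule.smul_mem W _ hw
      | succ m ih =>
        intro w hw hwne hsupp
        by_cases hmn : m + 1 ≤ n
        · by_cases htop : w ⟨m + 1, by omega⟩ = 0
          · apply ih w hw hwne
            intro j hj
            rcases Nat.lt_or_ge (j : ℕ) (m + 2) with h | h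
            · rw [show j = (⟨m + 1, by omega⟩ : Fin (n + 1)) by apply Fin.ext; simp; omega]
              exact htop
            · exact hsupp j (by omega)
          · apply ih (eM w) (Submodule.mem_comap.mp (hWe hw))
            · intro h
              have hc := congrFun h ⟨m, by omega⟩
              rw [eval_e w ⟨m, by omega⟩, Pi.zero_apply] at hc
              simp only [Fin.val_mk] at hc
              rw [dif_pos (by omega)] at hc
              rcases mul_eq_zero.mp hc with h1 | h1
              · exact heco m (by omega) h1
              · exact htop h1
            · intro j hj
              rw [eval_e w j]
              split_ifs with h
              · rw [hsupp ⟨(j : ℕ) + 1, by omega⟩ (by simp; omega), mul_zero]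
              · rfl
        · apply ih w hw hwne
          intro j hj
          have hjl := j.isLt
          exact absurd hj (by omega)
    have hv0 : (Pi.single (⟨0, by omega⟩ : Fin (n + 1)) 1 : Fin (n + 1) → F) ∈ W :=
      key n w0 hw0W hw0 (fun j hj => absurd hj (by have := j.isLt; omega))
    have hall : ∀ i : ℕ, ∀ h : i ≤ n,
        (Pi.single (⟨i, by omega⟩ : Fin (n + 1)) 1 : Fin (n + 1) → F) ∈ W := by
      intro i
      induction i with
      | zero => intro _; exact hv0
      | succ i ih =>
        intro h
        have hiW := ih (by omega)
        have hfi := hf i (by omega)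
        have hc := hfco i (by omega)
        have heq : (Pi.single (⟨i + 1, by omega⟩ : Fin (n + 1)) 1 : Fin (n + 1) → F)
            = ((q ^ (i + 1) - q⁻¹ ^ (i + 1)) / (q - q⁻¹))⁻¹ •
                fM (Pi.single ⟨i, by omega⟩ 1 : Fin (n + 1) → F) := by
          rw [hfi, smul_smul, inv_mul_cancel₀ hc, one_smul]
        rw [heq]
        exact Submodule.smul_mem W _ (Submodule.mem_comap.mp (hWf hiW))
    rw [eq_top_iff]
    intro w _
    have hw := hexp w
    rw [hw]
    apply Submodule.sum_mem
    intro j _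
    apply Submodule.smul_mem
    have := hall (j : ℕ) (by have := j.isLt; omega)
    rwa [Fin.eta] at this
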